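/- Let Γ be the pointclass of analytic (Σ¹₁) subsets of ℝ. If ℝ admits a partition into κ analytic sets for some uncountable cardinal κ, then ℝ admits a partition into κ Borel sets, and conversely; i.e., the uncountable partition spectrum of analytic sets equals that of Borel sets. -/

import Mathlib

open Cardinal Set

namespace Stmt18

noncomputable def omega1 : Ordinal.{0} := (ℵ_ 1).ord

def cyl (s : List ℕ) : Set (ℕ → ℕ) := {y | ∀ i < s.length, y i = s.getD i 0}

def Tx (f : (ℕ → ℕ) → ℝ) (x : ℝ) : Set (List ℕ) := {s | x ∈ closure (f '' cyl s)}

noncomputable def Sder (f : (ℕ → ℕ) → ℝ) (x : ℝ) : Ordinal.{0} → Set (List ℕ)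
  | α => {s | s ∈ Tx f x ∧ ∀ β, β < α → ∃ t ∈ Sder f x β, s <+: t ∧ s ≠ t}
termination_by α => α
decreasing_by exact ‹_›

theorem Sder_def (f : (ℕ → ℕ) → ℝ) (x : ℝ) (α : Ordinal.{0}) :
    Sder f x α = {s | s ∈ Tx f x ∧ ∀ β, β < α → ∃ t ∈ Sder f x β, s <+: t ∧ s ≠ t} := by
  rw [Sder]

theorem Sder_antitone (f : (ℕ → ℕ) → ℝ) (x : ℝ) {α β : Ordinal.{0}} (h : β ≤ α) :
    Sder f x α ⊆ Sder f x β := by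
  rw [Sder_def f x α, Sder_def f x β]
  rintro s ⟨h1, h2⟩
  exact ⟨h1, fun γ hγ => h2 γ (lt_of_lt_of_le hγ h)⟩

theorem Sder_subset_Tx (f : (ℕ → ℕ) → ℝ) (x : ℝ) (α : Ordinal.{0}) :
    Sder f x α ⊆ Tx f x := by
  rw [Sder_def]; exact fun s hs => hs.1

theorem countable_Iio {α : Ordinal.{0}} (hα : α < omega1) : Countable (Iio α) := by
  rw [omega1] at hα
  rw [← Cardinal.mk_le_aleph0_iff, Ordinal.mk_Iio_ordinal]
  have h1 : α.card ≤ ℵ₀ := by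
    have := Cardinal.lt_ord.mp hα
    rwa [← Cardinal.succ_aleph0, Order.lt_succ_iff] at this
  calc Cardinal.lift.{1} α.card ≤ Cardinal.lift.{1} ℵ₀ := Cardinal.lift_le.mpr h1
    _ = ℵ₀ := by simp

theorem measurable_Sder (f : (ℕ → ℕ) → ℝ) {α : Ordinal.{0}} (hα : α < omega1) (s : List ℕ) :
    MeasurableSet {x | s ∈ Sder f x α} := by
  induction α using Ordinal.induction generalizing s with
  | h α IH =>
  have key : {x | s ∈ Sder f x α} =
      closure (f '' cyl s) ∩
        ⋂ (β : Iio α), ⋃ (t : List ℕ), {x | (s <+: t ∧ s ≠ t) ∧ t ∈ Sder f x β} := by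
    ext x
    simp only [mem_setOf_eq, mem_inter_iff, mem_iInter, mem_iUnion, Subtype.forall]
    rw [Sder_def f x α]
    simp only [mem_setOf_eq]
    constructor
    · rintro ⟨h1, h2⟩
      refine ⟨h1, fun β hβ => ?_⟩
      obtain ⟨t, ht, hpre⟩ := h2 β hβ
      exact ⟨t, hpre, ht⟩
    · rintro ⟨h1, h2⟩
      refine ⟨h1, fun β hβ => ?_⟩
      obtain ⟨t, hpre, ht⟩ := h2 β hβ
      exact ⟨t, ht, hpre⟩
  rw [key]
  haveI : Countable (Iio α) := countable_Iio hα
  refine isClosed_closure.measurableSet.inter (MeasurableSet.iInter fun β => ?_)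
  refine MeasurableSet.iUnion fun t => ?_
  by_cases hc : s <+: t ∧ s ≠ t
  · simp only [eq_true hc, true_and]
    exact IH β β.2 (lt_trans β.2 hα) t
  · simp only [eq_false hc, false_and, setOf_false]
    exact MeasurableSet.empty

theorem getD_eq_of_prefix {p q : List ℕ} (h : p <+: q) {i : ℕ} (hi : i < p.length) :
    p.getD i 0 = q.getD i 0 := by
  obtain ⟨r, rfl⟩ := h
  rw [List.getD_eq_getElem?_getD, List.getD_eq_getElem?_getD, List.getElem?_append_left hi]

theorem mem_range_of_stable (f : (ℕ → ℕ) → ℝ) (hf : Continuous f) (x : ℝ)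
    (S : Set (List ℕ)) (hST : S ⊆ Tx f x) (s₀ : List ℕ) (hs₀ : s₀ ∈ S)
    (hstep : ∀ s ∈ S, ∃ t ∈ S, s <+: t ∧ s ≠ t) : x ∈ range f := by
  choose! ext hext1 hext2 hext3 using hstep
  set g : ℕ → List ℕ := fun k => ext^[k] s₀ with hg
  have hgS : ∀ k, g k ∈ S := by
    intro k; induction k with
    | zero => exact hs₀
    | succ k ih =>
      show ext^[k+1] s₀ ∈ S
      rw [Function.iterate_succ_apply']; exact hext1 _ ih
  have hgpre : ∀ k, g k <+: g (k + 1) := by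
    intro k
    have : g (k+1) = ext (g k) := Function.iterate_succ_apply' ext k s₀
    rw [this]; exact hext2 _ (hgS k)
  have hgne : ∀ k, g k ≠ g (k + 1) := by
    intro k
    have : g (k+1) = ext (g k) := Function.iterate_succ_apply' ext k s₀
    rw [this]; exact hext3 _ (hgS k)
  have hglen : ∀ k, (g k).length < (g (k+1)).length := by
    intro k
    rcases lt_or_eq_of_le (hgpre k).length_le with h | h
    · exact h
    · exact absurd ((hgpre k).eq_of_length h) (hgne k)
  have hmono : ∀ k l, k ≤ l → g k <+: g l := by
    intro k l hkl
    induction l with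
    | zero => simp_all
    | succ l ih =>
      rcases Nat.lt_or_ge k (l+1) with h | h
      · exact (ih (Nat.lt_succ_iff.mp h)).trans (hgpre l)
      · have : k = l + 1 := le_antisymm hkl h
        subst this; exact List.prefix_refl _
  have hlen : ∀ k, k ≤ (g k).length := by
    intro k; induction k with
    | zero => exact Nat.zero_le _
    | succ k ih => exact Nat.lt_of_le_of_lt ih (hglen k)
  set y : ℕ → ℕ := fun i => (g (i+1)).getD i 0 with hy
  have hycyl : ∀ k, y ∈ cyl (g k) := by
    intro k i hi
    rcases le_total (i+1) k with h | h
    · exact (getD_eq_of_prefix (hmono _ _ h)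
        (Nat.lt_of_lt_of_le (Nat.lt_succ_self i) (hlen (i+1)))).symm ▸ rfl
    · exact (getD_eq_of_prefix (hmono _ _ h) hi).symm
  have hnbhd : ∀ U : Set (ℕ → ℕ), IsOpen U → y ∈ U → ∃ k, cyl (g k) ⊆ U := by
    intro U hU hyU
    obtain ⟨I, u, hu, hsub⟩ := isOpen_pi_iff.mp hU y hyU
    refine ⟨(I.sup id) + 1, fun z hz => hsub ?_⟩
    intro a ha
    have haI : a < (g (I.sup id + 1)).length :=
      Nat.lt_of_le_of_lt (Finset.le_sup (f := id) ha)
        (Nat.lt_of_lt_of_le (Nat.lt_succ_self _) (hlen _))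
    have h1 : z a = (g (I.sup id + 1)).getD a 0 := hz a haI
    have h2 : y a = (g (I.sup id + 1)).getD a 0 := hycyl _ a haI
    rw [h1, ← h2]
    exact (hu a ha).2
  have : x = f y := by
    have hd : ∀ ε : ℝ, 0 < ε → dist x (f y) ≤ ε := by
      intro ε hε
      obtain ⟨k, hk⟩ := hnbhd (f ⁻¹' Metric.ball (f y) ε) (hf.isOpen_preimage _ Metric.isOpen_ball)
        (by simp [Metric.mem_ball_self hε])
      have hx : x ∈ closure (f '' cyl (g k)) := hST (hgS k)
      have hsub2 : f '' cyl (g k) ⊆ Metric.ball (f y) ε := by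
        rw [image_subset_iff]; exact hk
      have := (closure_mono hsub2).trans Metric.closure_ball_subset_closedBall
      exact Metric.mem_closedBall.mp (this hx)
    have h0 : dist x (f y) ≤ 0 := le_of_forall_pos_le_add (by intro ε hε; simpa using hd ε hε)
    exact eq_of_dist_eq_zero (le_antisymm h0 dist_nonneg)
  exact this ▸ mem_range_self y

def pref (y : ℕ → ℕ) (m : ℕ) : List ℕ := List.ofFn (fun i : Fin m => y i)

theorem pref_length (y : ℕ → ℕ) (m : ℕ) : (pref y m).length = m := List.length_ofFn

theorem pref_getD (y : ℕ → ℕ) (m : ℕ) {i : ℕ} (hi : i < m) : (pref y m).getD i 0 = y i := by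
  rw [List.getD_eq_getElem?_getD]
  have : i < (pref y m).length := by rwa [pref_length]
  rw [List.getElem?_eq_getElem this]
  simp [pref]

theorem mem_cyl_pref (y : ℕ → ℕ) (m : ℕ) : y ∈ cyl (pref y m) := by
  intro i hi
  rw [pref_length] at hi
  exact (pref_getD y m hi).symm

theorem pref_prefix (y : ℕ → ℕ) (m : ℕ) : pref y m <+: pref y (m+1) := by
  have : pref y (m+1) = pref y m ++ [y m] := by
    rw [pref, List.ofFn_succ']
    simp [pref, List.concat_eq_append]
  rw [this]
  exact List.prefix_append _ _

theorem pref_ne (y : ℕ → ℕ) (m : ℕ) : pref y m ≠ pref y (m+1) := by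
  intro h
  have := congrArg List.length h
  rw [pref_length, pref_length] at this
  omega

theorem branch_mem_Sder (f : (ℕ → ℕ) → ℝ) (y : ℕ → ℕ) (α : Ordinal.{0}) (m : ℕ) :
    pref y m ∈ Sder f (f y) α := by
  induction α using Ordinal.induction generalizing m with
  | h α IH =>
  rw [Sder_def]
  constructor
  · exact subset_closure ⟨y, mem_cyl_pref y m, rfl⟩
  · intro β hβ
    exact ⟨pref y (m+1), IH β hβ (m+1), pref_prefix y m, pref_ne y m⟩

theorem stabilizes (f : (ℕ → ℕ) → ℝ) (x : ℝ) :
    ∃ α : Iio omega1, Sder f x α ⊆ Sder f x (α + 1) := by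
  by_contra hcon
  push_neg at hcon
  have H : ∀ α : Iio omega1, ∃ s, s ∈ Sder f x α ∧ s ∉ Sder f x (α + 1) := by
    intro α
    obtain ⟨s, hs1, hs2⟩ := not_subset.mp (hcon α)
    exact ⟨s, hs1, hs2⟩
  choose F hF1 hF2 using H
  have hinj : Function.Injective
      (fun α : Iio omega1 => (ULift.up (F α) : ULift.{1} (List ℕ))) := by
    intro α β hab
    have hab : F α = F β := congrArg ULift.down hab
    by_contra hne
    rcases lt_or_gt_of_ne (Subtype.coe_ne_coe.mpr hne) with h | h
    · have : (α : Ordinal) + 1 ≤ β := by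
        rw [Ordinal.add_one_eq_succ]; exact Order.succ_le_of_lt h
      exact hF2 α (hab ▸ Sder_antitone f x this (hF1 β))
    · have : (β : Ordinal) + 1 ≤ α := by
        rw [Ordinal.add_one_eq_succ]; exact Order.succ_le_of_lt h
      exact hF2 β (hab.symm ▸ Sder_antitone f x this (hF1 α))
  have hle : #(Iio omega1) ≤ #(ULift.{1} (List ℕ)) := Cardinal.mk_le_of_injective hinj
  rw [Ordinal.mk_Iio_ordinal, omega1, Cardinal.card_ord, Cardinal.mk_uLift] at hle
  have h2 : Cardinal.lift.{1} #(List ℕ) ≤ Cardinal.lift.{1} ℵ₀ :=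
    Cardinal.lift_le.mpr Cardinal.mk_le_aleph0
  have h3 : Cardinal.lift.{1} (ℵ_ 1) ≤ Cardinal.lift.{1} ℵ₀ := hle.trans h2
  rw [Cardinal.lift_le] at h3
  exact absurd h3 (not_le.mpr Cardinal.aleph0_lt_aleph_one)

/-- Every analytic subset of ℝ is the union of an `Iio ω₁`-indexed family of Borel sets. -/
theorem analytic_decomp (A : Set ℝ) (hA : MeasureTheory.AnalyticSet A) :
    ∃ B : Iio omega1 → Set ℝ, (∀ i, MeasurableSet (B i)) ∧ (⋃ i, B i) = A := by
  rw [MeasureTheory.AnalyticSet_def] at hA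
  rcases hA with rfl | ⟨f, hf, rfl⟩
  · exact ⟨fun _ => ∅, fun _ => MeasurableSet.empty, by simp⟩
  refine ⟨fun i => {x | (∃ s, s ∈ Sder f x i) ∧
      ∀ s ∈ Sder f x i, ∃ t ∈ Sder f x i, s <+: t ∧ s ≠ t}, fun i => ?_, ?_⟩
  · beta_reduce
    have key : {x | (∃ s, s ∈ Sder f x i) ∧
        ∀ s ∈ Sder f x i, ∃ t ∈ Sder f x i, s <+: t ∧ s ≠ t} =
        (⋃ s : List ℕ, {x | s ∈ Sder f x (i : Ordinal)}) ∩
          ⋂ s : List ℕ, ({x | s ∈ Sder f x (i : Ordinal)}ᶜ ∪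
            ⋃ t : List ℕ, {x | (s <+: t ∧ s ≠ t) ∧ t ∈ Sder f x (i : Ordinal)}) := by
      ext x
      simp only [mem_setOf_eq, mem_inter_iff, mem_iUnion, mem_iInter, mem_union, mem_compl_iff]
      constructor
      · rintro ⟨⟨s, hs⟩, h2⟩
        refine ⟨⟨s, hs⟩, fun u => ?_⟩
        by_cases hu : u ∈ Sder f x i
        · obtain ⟨t, ht, hpre⟩ := h2 u hu
          exact Or.inr ⟨t, hpre, ht⟩
        · exact Or.inl hu
      · rintro ⟨⟨s, hs⟩, h2⟩
        refine ⟨⟨s, hs⟩, fun u hu => ?_⟩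
        rcases h2 u with h | ⟨t, hpre, ht⟩
        · exact absurd hu h
        · exact ⟨t, ht, hpre⟩
    rw [key]
    refine (MeasurableSet.iUnion fun s => measurable_Sder f i.2 s).inter
      (MeasurableSet.iInter fun s => ?_)
    refine ((measurable_Sder f i.2 s).compl).union (MeasurableSet.iUnion fun t => ?_)
    by_cases hc : s <+: t ∧ s ≠ t
    · simp only [eq_true hc, true_and]
      exact measurable_Sder f i.2 t
    · simp only [eq_false hc, false_and, setOf_false]
      exact MeasurableSet.empty
  · ext x
    simp only [mem_iUnion, mem_setOf_eq]
    constructor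
    · rintro ⟨i, ⟨s₀, hs₀⟩, hstep⟩
      exact mem_range_of_stable f hf x (Sder f x i) (Sder_subset_Tx f x i) s₀ hs₀ hstep
    · rintro ⟨y, rfl⟩
      obtain ⟨α, hα⟩ := stabilizes f (f y)
      refine ⟨α, ⟨pref y 0, branch_mem_Sder f y α 0⟩, fun s hs => ?_⟩
      have h1 : s ∈ Sder f (f y) ((α : Ordinal) + 1) := hα hs
      rw [Sder_def] at h1
      exact h1.2 α (by rw [Ordinal.add_one_eq_succ]; exact Order.lt_succ _)

end Stmt18

open Stmt18

/-- For uncountable κ, ℝ can be partitioned into κ analytic sets iff it can be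
partitioned into κ Borel sets. -/
theorem stmt_18 (κ : Cardinal) (hκ : ℵ₀ < κ) :
    (∃ P : Set (Set ℝ),
      (∀ p ∈ P, ∀ q ∈ P, p ≠ q → Disjoint p q) ∧
      (∀ p ∈ P, p.Nonempty ∧ MeasureTheory.AnalyticSet p) ∧
      ⋃₀ P = Set.univ ∧ #P = κ) ↔
    (∃ P : Set (Set ℝ),
      (∀ p ∈ P, ∀ q ∈ P, p ≠ q → Disjoint p q) ∧
      (∀ p ∈ P, p.Nonempty ∧ MeasurableSet p) ∧
      ⋃₀ P = Set.univ ∧ #P = κ) := by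
  constructor
  · rintro ⟨P, hdisj, hne, hcover, hcard⟩
    have key : ∀ p : P, ∃ B : Iio omega1 → Set ℝ,
        (∀ i, MeasurableSet (B i)) ∧ (⋃ i, B i) = (p : Set ℝ) :=
      fun p => Stmt18.analytic_decomp p ((hne p p.2).2)
    choose B hBm hBu using key
    set D : P → Iio omega1 → Set ℝ := fun p i =>
      B p i \ ⋃ j : Iio (i : Ordinal), B p ⟨j, Set.mem_Iio.mpr (lt_trans j.2 i.2)⟩ with hD
    have hDm : ∀ p i, MeasurableSet (D p i) := by
      intro p i
      haveI := Stmt18.countable_Iio i.2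
      exact (hBm p i).diff (MeasurableSet.iUnion fun j => hBm p _)
    have hDB : ∀ p i, D p i ⊆ B p i := fun p i => diff_subset
    have hDsub : ∀ p i, D p i ⊆ (p : Set ℝ) := by
      intro p i
      refine (hDB p i).trans ?_
      rw [← hBu p]
      exact subset_iUnion _ i
    have hDdisj : ∀ (p : P) (i j : Iio omega1), (i : Ordinal) < j →
        Disjoint (D p i) (D p j) := by
      intro p i j hij
      rw [Set.disjoint_left]
      intro x hxi hxj
      have hxBi : x ∈ B p i := hDB p i hxi
      refine hxj.2 ?_
      exact mem_iUnion.mpr ⟨⟨(i : Ordinal), hij⟩, by simpa using hxBi⟩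
    have hDcover : ∀ (p : P), ∀ x ∈ (p : Set ℝ), ∃ i, x ∈ D p i := by
      intro p x hx
      have hx2 : x ∈ ⋃ i, B p i := by rw [hBu p]; exact hx
      obtain ⟨i0, hi0⟩ := mem_iUnion.mp hx2
      obtain ⟨v, ⟨hv, hxv⟩, hmin⟩ := Ordinal.lt_wf.has_min
        {v : Ordinal | ∃ h : v < omega1, x ∈ B p ⟨v, h⟩} ⟨i0, i0.2, by simpa using hi0⟩
      refine ⟨⟨v, Set.mem_Iio.mpr hv⟩, hxv, fun hmem => ?_⟩
      obtain ⟨j, hj⟩ := mem_iUnion.mp hmem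
      exact hmin j ⟨_, hj⟩ j.2
    refine ⟨{q | q.Nonempty ∧ ∃ p : P, ∃ i, q = D p i}, ?_, ?_, ?_, ?_⟩
    · rintro q ⟨hqne, p, i, rfl⟩ q' ⟨hq'ne, p', i', rfl⟩ hne'
      by_cases hpp : p = p'
      · subst hpp
        rcases lt_trichotomy (i : Ordinal) (i' : Ordinal) with h | h | h
        · exact hDdisj p i i' h
        · exact absurd (congrArg (D p) (Subtype.ext h)) hne'
        · exact (hDdisj p i' i h).symm
      · exact (hdisj p p.2 p' p'.2 (Subtype.coe_injective.ne hpp)).mono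
          (hDsub p i) (hDsub p' i')
    · rintro q ⟨hqne, p, i, rfl⟩
      exact ⟨hqne, hDm p i⟩
    · ext x
      simp only [mem_sUnion, mem_univ, iff_true]
      have hx : x ∈ ⋃₀ P := hcover ▸ mem_univ x
      obtain ⟨p, hp, hxp⟩ := hx
      obtain ⟨i, hxi⟩ := hDcover ⟨p, hp⟩ x hxp
      exact ⟨D ⟨p, hp⟩ i, ⟨⟨x, hxi⟩, ⟨p, hp⟩, i, rfl⟩, hxi⟩
    · have hQle : #{q : Set ℝ | q.Nonempty ∧ ∃ p : P, ∃ i, q = D p i} ≤ κ := by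
        set e := (Ordinal.ToType.mk (o := Stmt18.omega1)) with he
        set G : ↥P × Stmt18.omega1.ToType → Set ℝ := fun z => D z.1 (e.symm z.2) with hG
        have hQsub : {q : Set ℝ | q.Nonempty ∧ ∃ p : P, ∃ i, q = D p i} ⊆ range G := by
          rintro q ⟨hqne, p, i, rfl⟩
          exact ⟨(p, e i), by simp [hG]⟩
        have h1 : #{q : Set ℝ | q.Nonempty ∧ ∃ p : P, ∃ i, q = D p i} ≤ #(↥P × Stmt18.omega1.ToType) :=
          (Cardinal.mk_le_mk_of_subset hQsub).trans (Cardinal.mk_range_le)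
        have h2 : #(↥P × Stmt18.omega1.ToType) = κ * ℵ_ 1 := by
          rw [Cardinal.mk_prod, hcard, Stmt18.omega1, Cardinal.mk_ord_toType]
          simp
        have h3 : κ * ℵ_ 1 = κ := by
          rw [Cardinal.mul_eq_max hκ.le Cardinal.aleph0_lt_aleph_one.le]
          exact max_eq_left (by rw [← Cardinal.succ_aleph0]; exact Order.succ_le_of_lt hκ)
        rw [h2, h3] at h1
        exact h1
      have hQge : κ ≤ #{q : Set ℝ | q.Nonempty ∧ ∃ p : P, ∃ i, q = D p i} := by
        have hsel : ∀ p : ↥P, ∃ q : ↥{q : Set ℝ | q.Nonempty ∧ ∃ p : P, ∃ i, q = D p i},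
            (q : Set ℝ) ⊆ (p : Set ℝ) ∧ (q : Set ℝ).Nonempty := by
          intro p
          obtain ⟨x, hx⟩ := (hne p p.2).1
          obtain ⟨i, hi⟩ := hDcover p x hx
          exact ⟨⟨D p i, ⟨⟨x, hi⟩, p, i, rfl⟩⟩, hDsub p i, ⟨x, hi⟩⟩
        choose φ hφsub hφne using hsel
        have hφinj : Function.Injective φ := by
          intro p p' hpp
          obtain ⟨x, hx⟩ := hφne p
          have hx1 : x ∈ (p : Set ℝ) := hφsub p hx
          have hx2 : x ∈ (p' : Set ℝ) := hφsub p' (hpp ▸ hx)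
          by_contra hne''
          exact Set.disjoint_left.mp
            (hdisj p p.2 p' p'.2 (Subtype.coe_injective.ne hne'')) hx1 hx2
        rw [← hcard]
        exact Cardinal.mk_le_of_injective hφinj
      exact le_antisymm hQle hQge
  · rintro ⟨P, hdisj, hne, hcover, hcard⟩
    exact ⟨P, hdisj, fun p hp => ⟨(hne p hp).1, (hne p hp).2.analyticSet⟩, hcover, hcard⟩
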